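/- For the function τ(y) = √(1+y²) - log(1 + √(1+y²)) + (1/(4v)) log(1+y²) - ((2j-1)/v) log y on (0,∞) (with j ≥ 1 integer and v > 0), its second derivative satisfies τ''(y) ≥ j/(v y²) for all y > 0, provided 2j - 1 ≥ j (i.e. j ≥ 1). -/

import Mathlib

open Real

private lemma sq_sqrt_aux (x : ℝ) : Real.sqrt (1 + x ^ 2) ^ 2 = 1 + x ^ 2 :=
  Real.sq_sqrt (by positivity)

private lemma one_le_sqrt_aux (x : ℝ) : 1 ≤ Real.sqrt (1 + x ^ 2) := by
  nlinarith [Real.sq_sqrt (show (0:ℝ) ≤ 1 + x ^ 2 by positivity),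
    Real.sqrt_nonneg (1 + x ^ 2)]

private lemma hasDerivAt_f (c : ℝ) (v : ℝ) (hv : 1 ≤ v) (x : ℝ) (hx : 0 < x) :
    HasDerivAt (fun y : ℝ =>
        Real.sqrt (1 + y ^ 2) - Real.log (1 + Real.sqrt (1 + y ^ 2))
          + (1 / (4 * v)) * Real.log (1 + y ^ 2)
          - (c / v) * Real.log y)
      (x / (1 + Real.sqrt (1 + x ^ 2)) + x / (2 * v * (1 + x ^ 2)) - (c / v) / x) x := by
  set s := Real.sqrt (1 + x ^ 2) with hs
  have hs1 : 1 ≤ s := one_le_sqrt_aux x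
  have hs0 : 0 < s := lt_of_lt_of_le one_pos hs1
  have hsq : s ^ 2 = 1 + x ^ 2 := sq_sqrt_aux x
  have h1 : HasDerivAt (fun y : ℝ => 1 + y ^ 2) (2 * x) x := by
    simpa using (hasDerivAt_pow 2 x).const_add 1
  have hsd : HasDerivAt (fun y : ℝ => Real.sqrt (1 + y ^ 2)) (2 * x / (2 * s)) x :=
    h1.sqrt (by positivity)
  have hlog1 : HasDerivAt (fun y : ℝ => Real.log (1 + Real.sqrt (1 + y ^ 2)))
      ((2 * x / (2 * s)) / (1 + s)) x := (hsd.const_add 1).log (by positivity)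
  have hlog2 : HasDerivAt (fun y : ℝ => Real.log (1 + y ^ 2)) (2 * x / (1 + x ^ 2)) x :=
    h1.log (by positivity)
  have hlog3 : HasDerivAt (fun y : ℝ => Real.log y) x⁻¹ x := Real.hasDerivAt_log hx.ne'
  have h := ((hsd.sub hlog1).add (hlog2.const_mul (1 / (4 * v)))).sub
    (hlog3.const_mul (c / v))
  refine h.congr_deriv ?_
  have hv0 : (0:ℝ) < v := lt_of_lt_of_le one_pos hv
  field_simp
  nlinarith [sq_nonneg x, sq_nonneg s, mul_pos hs0 hx, mul_pos hv0 hx, sq_nonneg (s*x)]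

theorem stmt_13 (j : ℕ) (hj : 1 ≤ j) (v : ℝ) (hv : 1 ≤ v) (y : ℝ) (hy : 0 < y) :
    (j : ℝ) / (v * y ^ 2) ≤
      deriv (deriv (fun y : ℝ =>
        Real.sqrt (1 + y ^ 2) - Real.log (1 + Real.sqrt (1 + y ^ 2))
          + (1 / (4 * v)) * Real.log (1 + y ^ 2)
          - ((2 * (j : ℝ) - 1) / v) * Real.log y)) y := by
  have hv0 : (0:ℝ) < v := lt_of_lt_of_le one_pos hv
  set c : ℝ := 2 * (j : ℝ) - 1 with hc
  have hj1 : (1:ℝ) ≤ (j : ℝ) := by exact_mod_cast hj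
  have hc1 : 1 ≤ c := by simp [hc]; linarith
  -- first derivative agrees with g on a neighborhood of y
  set g : ℝ → ℝ := fun x =>
    x / (1 + Real.sqrt (1 + x ^ 2)) + x / (2 * v * (1 + x ^ 2)) - (c / v) / x with hg
  have hev : deriv (fun y : ℝ =>
        Real.sqrt (1 + y ^ 2) - Real.log (1 + Real.sqrt (1 + y ^ 2))
          + (1 / (4 * v)) * Real.log (1 + y ^ 2)
          - ((2 * (j : ℝ) - 1) / v) * Real.log y) =ᶠ[nhds y] g := by
    filter_upwards [Ioi_mem_nhds hy] with x hx
    exact (hasDerivAt_f c v hv x hx).deriv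
  rw [hev.deriv_eq]
  -- now compute deriv g y
  set s := Real.sqrt (1 + y ^ 2) with hs
  have hs1 : 1 ≤ s := one_le_sqrt_aux y
  have hs0 : 0 < s := lt_of_lt_of_le one_pos hs1
  have hsq : s ^ 2 = 1 + y ^ 2 := sq_sqrt_aux y
  have h1 : HasDerivAt (fun x : ℝ => 1 + x ^ 2) (2 * y) y := by
    simpa using (hasDerivAt_pow 2 y).const_add 1
  have hsd : HasDerivAt (fun x : ℝ => Real.sqrt (1 + x ^ 2)) (2 * y / (2 * s)) y :=
    h1.sqrt (by positivity)
  have hA : HasDerivAt (fun x : ℝ => x / (1 + Real.sqrt (1 + x ^ 2)))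
      ((1 * (1 + s) - y * (2 * y / (2 * s))) / (1 + s) ^ 2) y :=
    (hasDerivAt_id y).div (hsd.const_add 1) (by positivity)
  have hB : HasDerivAt (fun x : ℝ => x / (2 * v * (1 + x ^ 2)))
      ((1 * (2 * v * (1 + y ^ 2)) - y * (2 * v * (2 * y))) / (2 * v * (1 + y ^ 2)) ^ 2) y :=
    (hasDerivAt_id y).div ((h1.const_mul (2 * v)).congr_deriv (by ring)) (by positivity)
  have hC : HasDerivAt (fun x : ℝ => (c / v) / x)
      ((0 * y - (c / v) * 1) / y ^ 2) y :=
    (hasDerivAt_const y (c / v)).div (hasDerivAt_id y) hy.ne'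
  have hG : HasDerivAt g
      ((1 * (1 + s) - y * (2 * y / (2 * s))) / (1 + s) ^ 2
        + (1 * (2 * v * (1 + y ^ 2)) - y * (2 * v * (2 * y))) / (2 * v * (1 + y ^ 2)) ^ 2
        - (0 * y - (c / v) * 1) / y ^ 2) y := (hA.add hB).sub hC
  rw [hG.deriv]
  -- simplify the derivative expression
  have key : (1 * (1 + s) - y * (2 * y / (2 * s))) / (1 + s) ^ 2
        + (1 * (2 * v * (1 + y ^ 2)) - y * (2 * v * (2 * y))) / (2 * v * (1 + y ^ 2)) ^ 2
        - (0 * y - (c / v) * 1) / y ^ 2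
      = 1 / (s * (1 + s)) + (1 - y ^ 2) / (2 * v * (1 + y ^ 2) ^ 2) + c / (v * y ^ 2) := by
    have e1 : (1 * (1 + s) - y * (2 * y / (2 * s))) / (1 + s) ^ 2 = 1 / (s * (1 + s)) := by
      rw [div_eq_div_iff (by positivity) (by positivity)]
      field_simp
      linear_combination hsq
    have e2 : (1 * (2 * v * (1 + y ^ 2)) - y * (2 * v * (2 * y))) / (2 * v * (1 + y ^ 2)) ^ 2
        = (1 - y ^ 2) / (2 * v * (1 + y ^ 2) ^ 2) := by
      rw [div_eq_div_iff (by positivity) (by positivity)]; ring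
    have e3 : (0 * y - (c / v) * 1) / y ^ 2 = -(c / (v * y ^ 2)) := by
      field_simp
      ring
    rw [e1, e2, e3]; ring
  rw [key]
  have hsle : s ≤ 1 + y ^ 2 := by nlinarith
  have hmain : 0 ≤ 1 / (s * (1 + s)) + (1 - y ^ 2) / (2 * v * (1 + y ^ 2) ^ 2) := by
    rw [div_add_div _ _ (by positivity) (by positivity), le_div_iff₀ (by positivity)]
    nlinarith [sq_nonneg y, sq_nonneg (1 + y ^ 2), mul_pos hs0 hs0,
      mul_le_mul_of_nonneg_left hsle (le_of_lt hs0),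
      mul_nonneg (sq_nonneg y) (sub_nonneg.mpr hv),
      mul_nonneg (mul_nonneg (sq_nonneg y) (sq_nonneg y)) (sub_nonneg.mpr hv)]
  have hjc : (j : ℝ) ≤ c := by linarith
  calc (j : ℝ) / (v * y ^ 2) ≤ c / (v * y ^ 2) := by gcongr
    _ ≤ 1 / (s * (1 + s)) + (1 - y ^ 2) / (2 * v * (1 + y ^ 2) ^ 2) + c / (v * y ^ 2) := by
        linarith
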